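/- arXiv:2102.02479 — 3 statements merged into one kernel-verified Lean document; each statement's English description precedes it below -/
import Mathlib

section
/- Let C be an abelian category having enough projective objects, and let F₀ be a generating class of objects of C consisting of projective objects (i.e. every object of C receives an epimorphism from an object of F₀). If an object V of C has finite projective dimension, then pd_C(V) = max{n : Ext^n_C(V,F) ≠ 0 for some object F in F₀}. -/
open TensorProduct CategoryTheory

universe u

namespace QuesProj

/-! ## Projective dimension via Ext -/

/-- The projective dimension of an object of an abelian category with enough projectives:
the supremum of the degrees in which some `Ext` group out of it is nonzero. -/
noncomputable def extPD {C : Type (u+1)} [Category.{u} C] [Abelian C] [EnoughProjectives C]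
    (V : C) : ℕ∞ :=
  sSup {n : ℕ∞ | ∃ m : ℕ, n = (m : ℕ∞) ∧
    ∃ W : C, Nontrivial (((Ext ℤ C m).obj (Opposite.op V)).obj W)}

/-! ## Comodules, comodule algebras and Hopf-Galois objects -/

section Coaction

variable (k : Type u) [Field k]
variable (A : Type u) [AddCommGroup A] [Module k A] [Coalgebra k A]
variable (V : Type u) [AddCommGroup V] [Module k V]

/-- A right `A`-comodule structure on `V`. -/
structure RightCoaction where
  ρ : V →ₗ[k] V ⊗[k] A
  coassoc : (TensorProduct.assoc k V A A).toLinearMap ∘ₗ ρ.rTensor A ∘ₗ ρ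
      = (Coalgebra.comul (R := k) (A := A)).lTensor V ∘ₗ ρ
  counit_comp : (TensorProduct.rid k V).toLinearMap ∘ₗ
      (Coalgebra.counit (R := k) (A := A)).lTensor V ∘ₗ ρ = LinearMap.id

variable {k A V}

/-- A linear map between right comodules is colinear. -/
def IsColinear {W : Type u} [AddCommGroup W] [Module k W]
    (coV : RightCoaction k A V) (coW : RightCoaction k A W) (f : V →ₗ[k] W) : Prop :=
  coW.ρ ∘ₗ f = f.rTensor A ∘ₗ coV.ρ

end Coaction

section ComodAlg

variable (k : Type u) [Field k]
variable (A : Type u) [Ring A] [Bialgebra k A]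
variable (R : Type u) [Ring R] [Algebra k R]

/-- A right `A`-comodule algebra structure on `R`. -/
structure RightComodAlg where
  ρ : R →ₗ[k] R ⊗[k] A
  coassoc : (TensorProduct.assoc k R A A).toLinearMap ∘ₗ ρ.rTensor A ∘ₗ ρ
      = (Coalgebra.comul (R := k) (A := A)).lTensor R ∘ₗ ρ
  counit_comp : (TensorProduct.rid k R).toLinearMap ∘ₗ
      (Coalgebra.counit (R := k) (A := A)).lTensor R ∘ₗ ρ = LinearMap.id
  map_one : ρ 1 = 1
  map_mul : ∀ x y : R, ρ (x * y) = ρ x * ρ y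

/-- A left `A`-comodule algebra structure on `R`. -/
structure LeftComodAlg where
  lam : R →ₗ[k] A ⊗[k] R
  coassoc : (TensorProduct.assoc k A A R).toLinearMap ∘ₗ
      (Coalgebra.comul (R := k) (A := A)).rTensor R ∘ₗ lam = lam.lTensor A ∘ₗ lam
  counit_comp : (TensorProduct.lid k R).toLinearMap ∘ₗ
      (Coalgebra.counit (R := k) (A := A)).rTensor R ∘ₗ lam = LinearMap.id
  map_one : lam 1 = 1
  map_mul : ∀ x y : R, lam (x * y) = lam x * lam y

variable {k A R}

/-- The coaction of a right comodule algebra, as a `RightCoaction`. -/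
def RightComodAlg.toCoaction (c : RightComodAlg k A R) : RightCoaction k A R :=
  ⟨c.ρ, c.coassoc, c.counit_comp⟩

/-- The canonical (Galois) map `R ⊗ R → A ⊗ R` of a left comodule algebra,
`x ⊗ y ↦ x₍₋₁₎ ⊗ x₍₀₎y`. -/
noncomputable def LeftComodAlg.can (c : LeftComodAlg k A R) : R ⊗[k] R →ₗ[k] A ⊗[k] R :=
  (LinearMap.mul' k R).lTensor A ∘ₗ (TensorProduct.assoc k A R R).toLinearMap ∘ₗ
    c.lam.rTensor R

/-- The canonical (Galois) map `R ⊗ R → R ⊗ A` of a right comodule algebra,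
`x ⊗ y ↦ xy₍₀₎ ⊗ y₍₁₎`. -/
noncomputable def RightComodAlg.can (c : RightComodAlg k A R) : R ⊗[k] R →ₗ[k] R ⊗[k] A :=
  (LinearMap.mul' k R).rTensor A ∘ₗ (TensorProduct.assoc k R R A).symm.toLinearMap ∘ₗ
    c.ρ.lTensor R

/-- `R` is a left `A`-Galois object via the left comodule algebra structure `c`:
it is nonzero and the canonical map is bijective. -/
def LeftComodAlg.IsGalois (c : LeftComodAlg k A R) : Prop :=
  Nontrivial R ∧ Function.Bijective c.can

/-- `R` is a right `A`-Galois object via the right comodule algebra structure `c`. -/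
def RightComodAlg.IsGalois (c : RightComodAlg k A R) : Prop :=
  Nontrivial R ∧ Function.Bijective c.can

/-- `R` is a left or right `A`-Galois object. -/
def IsGaloisObject (k A R : Type u) [Field k] [Ring A] [Bialgebra k A] [Ring R]
    [Algebra k R] : Prop :=
  (∃ c : LeftComodAlg k A R, c.IsGalois) ∨ (∃ c : RightComodAlg k A R, c.IsGalois)

end ComodAlg

/-! ## Trivial module, cohomological dimensions, smoothness -/

section Trivial

variable (k : Type u) [Field k] (A : Type u) [Ring A] [Bialgebra k A]

/-- The trivial module of a bialgebra: the base field with action through the counit. -/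
def TrivialModule (_A : Type u) : Type u := k

instance : AddCommGroup (TrivialModule k A) := inferInstanceAs (AddCommGroup k)

noncomputable instance : Module A (TrivialModule k A) :=
  Module.compHom k (Bialgebra.counitAlgHom k A).toRingHom

/-- The cohomological dimension of a Hopf algebra: the projective dimension of the
trivial module. -/
noncomputable def cdHopf : ℕ∞ := extPD (ModuleCat.of A (TrivialModule k A))

end Trivial

section Bimodule

attribute [local instance] TensorProduct.Algebra.module

variable (k : Type u) [Field k] (R : Type u) [Ring R] [Algebra k R]

/-- `k`-scalars commute appropriately with the enveloping algebra action. -/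
noncomputable def envTower : IsScalarTower k (R ⊗[k] Rᵐᵒᵖ) R := by
  constructor
  intro c e v
  show TensorProduct.Algebra.moduleAux (c • e) v = c • TensorProduct.Algebra.moduleAux e v
  rw [map_smul]
  rfl

attribute [local instance] envTower

/-- The Hochschild cohomological dimension of a `k`-algebra `R`: the projective dimension
of `R` in the category of `R`-bimodules, i.e. of modules over `R ⊗ Rᵐᵒᵖ`. -/
noncomputable def cdAlg : ℕ∞ := extPD (ModuleCat.of (R ⊗[k] Rᵐᵒᵖ) R)

/-- `FgProjDimLE S n M` says that the `S`-module `M` admits a resolution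
`0 → P_n → ⋯ → P_0 → M → 0` by finitely generated projective `S`-modules. -/
def FgProjDimLE (S : Type u) [Ring S] :
    ℕ → (M : Type u) → [AddCommGroup M] → [Module S M] → Prop
  | 0, M, _, _ => Module.Finite S M ∧ Module.Projective S M
  | (n+1), M, _, _ => ∃ (P : Type u) (_ : AddCommGroup P) (_ : Module S P) (φ : P →ₗ[S] M),
      Module.Finite S P ∧ Module.Projective S P ∧ Function.Surjective φ ∧
        FgProjDimLE S n (LinearMap.ker φ)

/-- A `k`-algebra `R` is homologically smooth if `R` admits a finite resolution by finitely
generated projective `R`-bimodules. -/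
def IsHomSmooth : Prop :=
  ∃ n : ℕ, FgProjDimLE (R ⊗[k] Rᵐᵒᵖ) n R

end Bimodule


/-! ## The trivial coaction and tensor product coactions -/

section UnitTensor

variable (k : Type u) [Field k] (A : Type u) [Ring A] [Bialgebra k A]

/-- The coaction on the monoidal unit `k`. -/
noncomputable def unitCoactMap : k →ₗ[k] k ⊗[k] A :=
  (Algebra.linearMap k A).lTensor k ∘ₗ (TensorProduct.lid k k).symm.toLinearMap

/-- The trivial right coaction on `k`. -/
noncomputable def unitCoaction : RightCoaction k A k where
  ρ := unitCoactMap k A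
  coassoc := by
    unfold unitCoactMap
    apply LinearMap.ext_ring
    simp [Bialgebra.comul_one, Algebra.TensorProduct.one_def]
  counit_comp := by
    unfold unitCoactMap
    apply LinearMap.ext_ring
    simp [Bialgebra.counit_one]

variable {k A}

/-- The canonical coaction on the tensor product of two comodules. -/
noncomputable def tensorCoactMap {V W : Type u} [AddCommGroup V] [Module k V]
    [AddCommGroup W] [Module k W] (ρV : V →ₗ[k] V ⊗[k] A) (ρW : W →ₗ[k] W ⊗[k] A) :
    V ⊗[k] W →ₗ[k] (V ⊗[k] W) ⊗[k] A :=
  (LinearMap.mul' k A).lTensor (V ⊗[k] W) ∘ₗ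
    (TensorProduct.tensorTensorTensorComm k V A W A).toLinearMap ∘ₗ TensorProduct.map ρV ρW

end UnitTensor

/-! ## Haar integrals, modular functionals and averaging -/


section Haar

variable {k : Type u} [Field k] {A : Type u} [Ring A] [HopfAlgebra k A]

/-- Convolution product of two linear functionals on a coalgebra. -/
noncomputable def convF (ψ φ : A →ₗ[k] k) : A →ₗ[k] k :=
  LinearMap.mul' k k ∘ₗ TensorProduct.map ψ φ ∘ₗ Coalgebra.comul

/-- Convolution `ψ ∗ g` of a functional with a linear endomap. -/
noncomputable def convL (ψ : A →ₗ[k] k) (g : A →ₗ[k] A) : A →ₗ[k] A :=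
  (TensorProduct.lid k A).toLinearMap ∘ₗ TensorProduct.map ψ g ∘ₗ Coalgebra.comul

/-- Convolution `g ∗ ψ` of a linear endomap with a functional. -/
noncomputable def convR (g : A →ₗ[k] A) (ψ : A →ₗ[k] k) : A →ₗ[k] A :=
  (TensorProduct.rid k A).toLinearMap ∘ₗ TensorProduct.map g ψ ∘ₗ Coalgebra.comul

/-- `h : A → k` is a Haar integral: `h(a₍₁₎)a₍₂₎ = h(a)1 = h(a₍₂₎)a₍₁₎` and `h(1) = 1`. -/
structure IsHaar (h : A →ₗ[k] k) : Prop where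
  left_inv : (TensorProduct.lid k A).toLinearMap ∘ₗ h.rTensor A ∘ₗ
      (Coalgebra.comul (R := k) (A := A)) = Algebra.linearMap k A ∘ₗ h
  right_inv : (TensorProduct.rid k A).toLinearMap ∘ₗ h.lTensor A ∘ₗ
      (Coalgebra.comul (R := k) (A := A)) = Algebra.linearMap k A ∘ₗ h
  map_one : h 1 = 1

/-- A Hopf algebra is cosemisimple iff it admits a Haar integral. -/
def IsCosemisimple (k : Type u) [Field k] (A : Type u) [Ring A] [HopfAlgebra k A] : Prop :=
  ∃ h : A →ₗ[k] k, IsHaar h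

/-- The modular automorphism `σ = ψ ∗ id ∗ ψ` associated to a functional `ψ`. -/
noncomputable def sigmaOf (ψ : A →ₗ[k] k) : A →ₗ[k] A := convL ψ (convR LinearMap.id ψ)

/-- A modular functional on a cosemisimple Hopf algebra with Haar integral `h`:
a convolution invertible functional `ψ` with `S² = ψ ∗ id ∗ ψ⁻¹`, such that
`σ = ψ ∗ id ∗ ψ` is an algebra automorphism and `h(ab) = h(b σ(a))`. -/
structure ModularFunctional (h : A →ₗ[k] k) : Type u where
  ψ : A →ₗ[k] k
  ψinv : A →ₗ[k] k
  inv_left : convF ψ ψinv = Coalgebra.counit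
  inv_right : convF ψinv ψ = Coalgebra.counit
  antipode_sq : (HopfAlgebra.antipode (R := k) (A := A)) ∘ₗ HopfAlgebra.antipode (R := k) (A := A)
      = convL ψ (convR LinearMap.id ψinv)
  sigma_one : sigmaOf ψ 1 = 1
  sigma_mul : ∀ a b : A, sigmaOf ψ (a * b) = sigmaOf ψ a * sigmaOf ψ b
  sigma_bijective : Function.Bijective (sigmaOf ψ)
  kms : ∀ a b : A, h (a * b) = h (b * sigmaOf ψ a)

variable {V W : Type u} [AddCommGroup V] [Module k V] [AddCommGroup W] [Module k W]

/-- The averaging of a linear map `f : V → W` between right `A`-comodules with respect to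
a linear functional `h` on `A`: `v ↦ h(f(v₍₀₎)₍₁₎ S(v₍₁₎)) f(v₍₀₎)₍₀₎`. -/
noncomputable def avg (ρV : V →ₗ[k] V ⊗[k] A) (ρW : W →ₗ[k] W ⊗[k] A)
    (h : A →ₗ[k] k) (f : V →ₗ[k] W) : V →ₗ[k] W :=
  (TensorProduct.rid k W).toLinearMap ∘ₗ h.lTensor W ∘ₗ (LinearMap.mul' k A).lTensor W ∘ₗ
    (TensorProduct.assoc k W A A).toLinearMap ∘ₗ ρW.rTensor A ∘ₗ
      (HopfAlgebra.antipode (R := k) (A := A)).lTensor W ∘ₗ f.rTensor A ∘ₗ ρV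

/-- The twist `ρ = id ∗ ψ⁻²` of a right comodule (algebra), `x ↦ ψ⁻²(x₍₁₎)x₍₀₎`. -/
noncomputable def comodTwist (φ : A →ₗ[k] k) (ρV : V →ₗ[k] V ⊗[k] A) : V →ₗ[k] V :=
  (TensorProduct.rid k V).toLinearMap ∘ₗ φ.lTensor V ∘ₗ ρV

/-- The twist `θ = ψ² ∗ id : A → A`. -/
noncomputable def thetaOf (φ : A →ₗ[k] k) : A →ₗ[k] A := convL φ LinearMap.id

end Haar


end QuesProj


open QuesProj CategoryTheory Limits

section Aux

variable {C : Type (u+1)} [Category.{u} C] [Abelian C] [EnoughProjectives C]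

/-- Postcomposition map between the Hom complexes computing Ext. -/
noncomputable def lyMapAux (Q : ChainComplex C ℕ) {Y Z : C} (g : Y ⟶ Z) :
    Q.linearYonedaObj ℤ Y ⟶ Q.linearYonedaObj ℤ Z where
  f i := ModuleCat.ofHom (Linear.rightComp ℤ (Q.X i) g)
  comm' i j _ := by
    ext (f : Q.X i ⟶ Y)
    simp [ChainComplex.linearYonedaObj_d, ModuleCat.ofHom, Linear.leftComp, Linear.rightComp]
    exact (Category.assoc _ _ _).symm

/-- If `Ext^m(V, W)` is nonzero, all `Ext^{m+1}(V, -)` vanish and `p : F ⟶ W` is an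
epimorphism, then `Ext^m(V, F)` is nonzero. -/
lemma ext_nontrivial_of_epi (V W F : C) (m : ℕ) (p : F ⟶ W) [Epi p]
    (h1 : Nontrivial (((Ext ℤ C m).obj (Opposite.op V)).obj W))
    (h2 : ∀ K : C, Subsingleton (((Ext ℤ C (m+1)).obj (Opposite.op V)).obj K)) :
    Nontrivial (((Ext ℤ C m).obj (Opposite.op V)).obj F) := by
  classical
  let P : ProjectiveResolution V := ProjectiveResolution.of V
  haveI : ∀ n, Projective (P.complex.X n) := P.projective
  set Q := P.complex with hQ
  let K := kernel p
  have hzero : lyMapAux Q (kernel.ι p) ≫ lyMapAux Q p = 0 := by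
    ext i (f : Q.X i ⟶ K)
    simp [lyMapAux, Linear.rightComp]
    exact (show (f ≫ kernel.ι p) ≫ p = 0 by simp)
  let S : ShortComplex (HomologicalComplex (ModuleCat ℤ) (ComplexShape.up ℕ)) :=
    ShortComplex.mk (lyMapAux Q (kernel.ι p)) (lyMapAux Q p) hzero
  have hS : S.ShortExact := by
    apply HomologicalComplex.shortExact_of_degreewise_shortExact
    intro i
    have hmono : Mono ((S.map (HomologicalComplex.eval _ _ i)).f) := by
      rw [ModuleCat.mono_iff_injective]
      intro a b hab
      have : (a : Q.X i ⟶ K) ≫ kernel.ι p = (b : Q.X i ⟶ K) ≫ kernel.ι p := hab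
      exact (cancel_mono (kernel.ι p)).1 this
    have hepi : Epi ((S.map (HomologicalComplex.eval _ _ i)).g) := by
      rw [ModuleCat.epi_iff_surjective]
      intro (h : Q.X i ⟶ W)
      exact ⟨Projective.factorThru h p, (Projective.factorThru_comp h p : _)⟩
    have hexact : (S.map (HomologicalComplex.eval _ _ i)).Exact := by
      rw [ShortComplex.moduleCat_exact_iff]
      intro (f : Q.X i ⟶ F) hf
      have hf' : f ≫ p = 0 := hf
      refine ⟨kernel.lift p f hf', ?_⟩
      show kernel.lift p f hf' ≫ kernel.ι p = f
      simp
    exact { exact := hexact, mono_f := hmono, epi_g := hepi }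
  have hrel : (ComplexShape.up ℕ).Rel m (m+1) := by simp
  haveI hsub : Subsingleton ((Q.linearYonedaObj ℤ K).homology (m+1)) := by
    haveI := h2 K
    exact Equiv.subsingleton
      (((forget (ModuleCat ℤ)).mapIso (P.isoExt (m+1) K (R := ℤ))).toEquiv.symm)
  have hsurj : Function.Surjective (HomologicalComplex.homologyMap S.g m) := by
    have hex := hS.homology_exact₃ m (m+1) hrel
    rw [ShortComplex.moduleCat_exact_iff] at hex
    intro y
    exact hex y (Subsingleton.elim _ _)
  haveI hW : Nontrivial ((Q.linearYonedaObj ℤ W).homology m) := by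
    haveI := h1
    exact Equiv.nontrivial
      (((forget (ModuleCat ℤ)).mapIso (P.isoExt m W (R := ℤ))).toEquiv.symm)
  have hF : Nontrivial ((Q.linearYonedaObj ℤ F).homology m) := by
    obtain ⟨a, b, hab⟩ := hW
    obtain ⟨a', ha⟩ := hsurj a
    obtain ⟨b', hb⟩ := hsurj b
    exact ⟨a', b', fun h => hab (by rw [← ha, ← hb, h])⟩
  haveI := hF
  exact Equiv.nontrivial (((forget (ModuleCat ℤ)).mapIso (P.isoExt m F (R := ℤ))).toEquiv)

end Aux


/-- In an abelian category with enough projectives, if `F₀` is a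
generating class consisting of projective objects and `V` has finite projective dimension,
then `pd(V) = max {n : Ext^n(V, F) ≠ 0 for some F ∈ F₀}`. -/
theorem pd_eq_sup_ext_generating_projectives {C : Type (u+1)} [Category.{u} C] [Abelian C]
    [EnoughProjectives C] (F₀ : Set C)
    (hproj : ∀ P ∈ F₀, Projective P)
    (hgen : ∀ V : C, ∃ P ∈ F₀, ∃ f : P ⟶ V, Epi f)
    (V : C) (hfin : extPD V ≠ ⊤) :
    extPD V = sSup {n : ℕ∞ | ∃ m : ℕ, n = (m : ℕ∞) ∧
      ∃ F ∈ F₀, Nontrivial (((Ext ℤ C m).obj (Opposite.op V)).obj F)} := by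
  classical
  obtain ⟨d₀, hd₀⟩ := WithTop.ne_top_iff_exists.mp hfin
  set Sn : Set ℕ := {k | ∃ W : C, Nontrivial (((Ext ℤ C k).obj (Opposite.op V)).obj W)}
    with hSn
  have hbdd : BddAbove Sn := by
    refine ⟨d₀, fun k hk => ?_⟩
    have h1 : (k : ℕ∞) ≤ extPD V := by
      apply le_sSup
      exact ⟨k, rfl, hk⟩
    rw [← hd₀] at h1
    exact WithTop.coe_le_coe.mp h1
  apply le_antisymm
  · apply sSup_le
    rintro n ⟨m, rfl, W, hW⟩
    have hmem : m ∈ Sn := ⟨W, hW⟩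
    have hne : Sn.Nonempty := ⟨m, hmem⟩
    set m₀ := sSup Sn with hm₀def
    obtain ⟨W₀, hW₀⟩ : m₀ ∈ Sn := Nat.sSup_mem hne hbdd
    have h2 : ∀ K : C, Subsingleton (((Ext ℤ C (m₀+1)).obj (Opposite.op V)).obj K) := by
      intro K
      rw [← not_nontrivial_iff_subsingleton]
      intro h
      have h3 : m₀ + 1 ≤ m₀ := le_csSup hbdd ⟨K, h⟩
      omega
    obtain ⟨Fo, hFo, p, hp⟩ := hgen W₀
    haveI := hp
    have hkey := ext_nontrivial_of_epi V W₀ Fo m₀ p hW₀ h2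
    calc (m : ℕ∞) ≤ (m₀ : ℕ∞) := by exact_mod_cast le_csSup hbdd hmem
      _ ≤ sSup {n : ℕ∞ | ∃ m : ℕ, n = (m : ℕ∞) ∧
          ∃ F ∈ F₀, Nontrivial (((Ext ℤ C m).obj (Opposite.op V)).obj F)} :=
        le_sSup ⟨m₀, rfl, Fo, hFo, hkey⟩
  · apply sSup_le_sSup
    rintro n ⟨m, hn, F, _, hF⟩
    exact ⟨m, hn, F, hF⟩
end

section
/- Let C and D be abelian categories having enough projective objects and let F: C → D be an exact functor preserving projective objects which is twisted separable, with autoequivalence Θ, class F, isomorphisms θ_P, and natural maps M, such that F contains a generating subclass F₀ consisting of projective objects. Then for all objects X, W of C there is a morphism Ext*_D(F(X), ΘF(W)) → Ext*_C(X,W) (induced by the maps M on a projective resolution), and this morphism is surjective whenever W belongs to F. In particular, for W in F, if Ext^n_C(X,W) ≠ 0 then Ext^n_D(F(X), ΘF(W)) ≠ 0. -/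
open TensorProduct CategoryTheory

universe u

namespace QuesProj

section Bimodule

attribute [local instance] TensorProduct.Algebra.module

variable (k : Type u) [Field k] (R : Type u) [Ring R] [Algebra k R]

attribute [local instance] envTower

end Bimodule


/-! ## Twisted separable functors and separable functors -/

section Functors

variable {C : Type (u+1)} {D : Type (u+1)} [Category.{u} C] [Category.{u} D]

/-- The data exhibiting a functor as twisted separable: an autoequivalence `Θ` of the
target, a generating class `cls` with isomorphisms `θ_P : F(P) ≅ Θ(F(P))`, and natural
retraction maps `M` with `M(θ_P) = id`. -/
structure TwistedSeparableData (F : C ⥤ D) where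
  Θ : D ⥤ D
  isEquiv : Θ.IsEquivalence
  cls : Set C
  generating : ∀ V : C, ∃ P ∈ cls, ∃ f : P ⟶ V, Epi f
  θ : ∀ P : C, P ∈ cls → (F.obj P ≅ Θ.obj (F.obj P))
  M : ∀ V W : C, (F.obj V ⟶ Θ.obj (F.obj W)) → (V ⟶ W)
  natural : ∀ {V' V W W' : C} (α : V' ⟶ V) (β : W ⟶ W') (f : F.obj V ⟶ Θ.obj (F.obj W)),
    α ≫ M V W f ≫ β = M V' W' (F.map α ≫ f ≫ Θ.map (F.map β))
  normal : ∀ (P : C) (hP : P ∈ cls), M P P (θ P hP).hom = 𝟙 P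

/-- A functor is twisted separable if it admits twisted separability data. -/
def TwistedSeparable (F : C ⥤ D) : Prop := Nonempty (TwistedSeparableData F)

/-- A separable functor in the sense of Năstăsescu-Van den Bergh-Van Oystaeyen:
there are natural retractions `Hom(F V, F W) → Hom(V, W)` of the action of `F`. -/
def IsSeparableFunctor (F : C ⥤ D) : Prop :=
  ∃ M : ∀ V W : C, (F.obj V ⟶ F.obj W) → (V ⟶ W),
    (∀ (V W : C) (f : V ⟶ W), M V W (F.map f) = f) ∧
    (∀ (V' V W W' : C) (α : V' ⟶ V) (β : W ⟶ W') (f : F.obj V ⟶ F.obj W),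
      α ≫ M V W f ≫ β = M V' W' (F.map α ≫ f ≫ F.map β))

end Functors

end QuesProj

open QuesProj CategoryTheory


section TwistedSepAux

open CategoryTheory.Limits

variable {C D : Type (u+1)} [Category.{u} C] [Category.{u} D] [Abelian C] [Abelian D]
variable {F : C ⥤ D} (T : TwistedSeparableData F)

/-- The retraction maps of twisted separability data send `0` to `0`. -/
lemma TSD_M_zero [F.Additive] (V W : C) : T.M V W 0 = 0 := by
  have h := T.natural (0 : V ⟶ V) (𝟙 W) (0 : F.obj V ⟶ T.Θ.obj (F.obj W))
  simpa using h.symm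

/-- The retraction maps of twisted separability data are additive. -/
lemma TSD_M_add [F.Additive] [T.Θ.Additive] (V W : C)
    (f g : F.obj V ⟶ T.Θ.obj (F.obj W)) :
    T.M V W (f + g) = T.M V W f + T.M V W g := by
  let h : F.obj V ⟶ T.Θ.obj (F.obj (W ⊞ W)) :=
    f ≫ T.Θ.map (F.map biprod.inl) + g ≫ T.Θ.map (F.map biprod.inr)
  have key : ∀ (β : W ⊞ W ⟶ W) (x : F.obj V ⟶ T.Θ.obj (F.obj W)),
      h ≫ T.Θ.map (F.map β) = x → T.M V (W ⊞ W) h ≫ β = T.M V W x := by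
    intro β x hx
    have hn := T.natural (𝟙 V) β h
    rw [Category.id_comp, F.map_id, Category.id_comp, hx] at hn
    exact hn
  have h1 : T.M V (W ⊞ W) h ≫ biprod.fst = T.M V W f := key _ _ (by
    simp only [h, Preadditive.add_comp, Category.assoc, ← Functor.map_comp,
      biprod.inl_fst, biprod.inr_fst, Functor.map_id, Category.comp_id,
      Functor.map_zero, comp_zero, add_zero]
    simp)
  have h2 : T.M V (W ⊞ W) h ≫ biprod.snd = T.M V W g := key _ _ (by
    simp only [h, Preadditive.add_comp, Category.assoc, ← Functor.map_comp,
      biprod.inl_snd, biprod.inr_snd, Functor.map_id, Category.comp_id,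
      Functor.map_zero, comp_zero, zero_add]
    simp)
  have h3 : T.M V (W ⊞ W) h ≫ (biprod.fst + biprod.snd) = T.M V W (f + g) := key _ _ (by
    simp only [h, Functor.map_add, Preadditive.add_comp, Preadditive.comp_add,
      Category.assoc, ← Functor.map_comp,
      biprod.inl_fst, biprod.inr_fst, biprod.inl_snd, biprod.inr_snd,
      Functor.map_id, Category.comp_id, Functor.map_zero, comp_zero]
    simp)
  rw [Preadditive.comp_add, h1, h2] at h3
  exact h3.symm

end TwistedSepAux

/-- Let `F : C ⥤ D` be an exact functor between abelian categories with
enough projectives, preserving projective objects, equipped with twisted separability data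
whose class contains a generating subclass `F₀` of projectives. Then for all `X, W` and
`n` there is a (ℤ-linear) map `Ext^n_D(F X, Θ (F W)) → Ext^n_C(X, W)` which is surjective
whenever `W` belongs to the class; in particular, for such `W`, if `Ext^n_C(X,W) ≠ 0` then
`Ext^n_D(F X, Θ (F W)) ≠ 0`. -/
theorem ext_surjection_of_twisted_separable {C D : Type (u+1)} [Category.{u} C]
    [Category.{u} D] [Abelian C] [Abelian D] [EnoughProjectives C] [EnoughProjectives D]
    (F : C ⥤ D) [Limits.PreservesFiniteLimits F] [Limits.PreservesFiniteColimits F]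
    (hproj : ∀ P : C, Projective P → Projective (F.obj P))
    (T : TwistedSeparableData F)
    (F₀ : Set C) (hsub : F₀ ⊆ T.cls)
    (hproj₀ : ∀ P ∈ F₀, Projective P)
    (hgen₀ : ∀ V : C, ∃ P ∈ F₀, ∃ f : P ⟶ V, Epi f)
    (X W : C) (n : ℕ) :
    ∃ φ : (((Ext ℤ D n).obj (Opposite.op (F.obj X))).obj (T.Θ.obj (F.obj W))) →ₗ[ℤ]
        (((Ext ℤ C n).obj (Opposite.op X)).obj W),
      (W ∈ T.cls → Function.Surjective φ) ∧
      (W ∈ T.cls → Nontrivial (((Ext ℤ C n).obj (Opposite.op X)).obj W) →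
        Nontrivial (((Ext ℤ D n).obj (Opposite.op (F.obj X))).obj (T.Θ.obj (F.obj W)))) := by
  haveI : F.Additive := Functor.additive_of_preserves_binary_products F
  haveI : T.Θ.IsEquivalence := T.isEquiv
  haveI : T.Θ.Additive := Functor.additive_of_preserves_binary_products T.Θ
  by_cases hW : W ∈ T.cls
  · set Y := T.Θ.obj (F.obj W) with hY
    let P := ProjectiveResolution.of X
    let Q : ProjectiveResolution (F.obj X) :=
      { complex := (F.mapHomologicalComplex (ComplexShape.down ℕ)).obj P.complex
        projective := fun i => hproj _ (P.projective i)
        π := (F.mapHomologicalComplex (ComplexShape.down ℕ)).map P.π ≫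
          (HomologicalComplex.singleMapHomologicalComplex F (ComplexShape.down ℕ) 0).hom.app X
        quasiIso := inferInstance }
    let Kc := P.complex.linearYonedaObj ℤ W
    let Lc := Q.complex.linearYonedaObj ℤ Y
    let mmap : Lc ⟶ Kc :=
      { f := fun i => ModuleCat.ofHom
          { toFun := fun f => T.M (P.complex.X i) W f
            map_add' := fun f g => TSD_M_add T _ _ f g
            map_smul' := fun r f =>
              (AddMonoidHom.mk' (T.M (P.complex.X i) W) (TSD_M_add T _ _)).map_zsmul r f }
        comm' := by
          intro i j hij
          ext f
          change F.obj (P.complex.X i) ⟶ T.Θ.obj (F.obj W) at f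
          show P.complex.d j i ≫ T.M (P.complex.X i) W f
            = T.M (P.complex.X j) W (F.map (P.complex.d j i) ≫ f)
          have hn := T.natural (P.complex.d j i) (𝟙 W) f
          simpa using hn }
    let smap : Kc ⟶ Lc :=
      { f := fun i => ModuleCat.ofHom
          { toFun := fun f => F.map f ≫ (T.θ W hW).hom
            map_add' := fun f g => by
              dsimp only
              rw [F.map_add]; exact Preadditive.add_comp _ _ _ _ _ _
            map_smul' := fun r f => by
              dsimp only
              rw [F.map_zsmul]; exact Preadditive.zsmul_comp _ _ _ }
        comm' := by
          intro i j hij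
          ext f
          change P.complex.X i ⟶ W at f
          show F.map (P.complex.d j i) ≫ (F.map f ≫ (T.θ W hW).hom)
            = F.map (P.complex.d j i ≫ f) ≫ (T.θ W hW).hom
          rw [F.map_comp, Category.assoc] }
    have hsm : smap ≫ mmap = 𝟙 Kc := by
      ext i f
      change P.complex.X i ⟶ W at f
      show T.M (P.complex.X i) W (F.map f ≫ (T.θ W hW).hom) = f
      have hn := T.natural f (𝟙 W) (T.θ W hW).hom
      rw [T.normal W hW] at hn
      simpa using hn.symm
    let e1 := Q.isoExt (R := ℤ) n Y
    let e2 := P.isoExt (R := ℤ) n W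
    let φm : ((Ext ℤ D n).obj (Opposite.op (F.obj X))).obj Y ⟶
        ((Ext ℤ C n).obj (Opposite.op X)).obj W :=
      e1.hom ≫ HomologicalComplex.homologyMap mmap n ≫ e2.inv
    let ψm : ((Ext ℤ C n).obj (Opposite.op X)).obj W ⟶
        ((Ext ℤ D n).obj (Opposite.op (F.obj X))).obj Y :=
      e2.hom ≫ HomologicalComplex.homologyMap smap n ≫ e1.inv
    have hcomp : ψm ≫ φm = 𝟙 _ := by
      simp only [φm, ψm, Category.assoc, Iso.inv_hom_id_assoc]
      rw [← Category.assoc (HomologicalComplex.homologyMap smap n),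
        ← HomologicalComplex.homologyMap_comp, hsm, HomologicalComplex.homologyMap_id]
      simp
    have hsurj : Function.Surjective φm := by
      intro y
      refine ⟨ψm y, ?_⟩
      have h1 : φm (ψm y) = (ψm ≫ φm) y := rfl
      rw [h1, hcomp]
      rfl
    let φL := (φm.hom : @LinearMap ℤ ℤ Int.instSemiring Int.instSemiring (RingHom.id ℤ) _ _ _ _
      (((Ext ℤ D n).obj (Opposite.op (F.obj X))).obj Y).isModule
      (((Ext ℤ C n).obj (Opposite.op X)).obj W).isModule)
    let φl := φL
    have hsurj' : Function.Surjective φl := hsurj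
    refine ⟨φl, fun _ => hsurj', fun _ hnt => ?_⟩
    obtain ⟨a, b, hab⟩ := hnt
    obtain ⟨a', ha⟩ := hsurj a
    obtain ⟨b', hb⟩ := hsurj b
    exact ⟨a', b', fun h => hab (by rw [← ha, ← hb, h])⟩
  · exact ⟨0, fun h => absurd h hW, fun h => absurd h hW⟩
end

section
/- Let A be a cosemisimple Hopf algebra over an algebraically closed field k, let V be a right A-comodule, let R be a right A-comodule algebra, and let ρ be the automorphism of R given by ρ(x) = ψ⁻²(x₍₁₎)x₍₀₎ for a modular functional ψ. Consider the linear map ρ_V = ρ⊗id_V⊗id_R on the free relative Hopf bimodule R⊗V⊗R. Then the averaging of ρ_V is the identity: M(ρ_V) = id_{R⊗V⊗R}. -/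
open TensorProduct CategoryTheory

universe u

namespace QuesProj

section Bimodule

attribute [local instance] TensorProduct.Algebra.module

variable (k : Type u) [Field k] (R : Type u) [Ring R] [Algebra k R]

attribute [local instance] envTower

end Bimodule


end QuesProj

open QuesProj

namespace AvgAux
variable {k : Type u} [CommRing k]

section Conv
variable {C B : Type*} [AddCommGroup C] [Module k C] [Coalgebra k C]
  [Ring B] [Algebra k B]

/-- Convolution product of linear maps from a coalgebra to an algebra. -/
noncomputable def cv (f g : C →ₗ[k] B) : C →ₗ[k] B :=
  LinearMap.mul' k B ∘ₗ TensorProduct.map f g ∘ₗ Coalgebra.comul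

/-- Convolution unit. -/
noncomputable def cvOne : C →ₗ[k] B := Algebra.linearMap k B ∘ₗ Coalgebra.counit

lemma cv_apply_repr (f g : C →ₗ[k] B) {c : C} {ι : Type*} (r : Coalgebra.Repr k c ι) :
    cv f g c = ∑ i ∈ r.index, f (r.left i) * g (r.right i) := by
  simp [cv, ← r.eq, map_sum]

lemma cv_one_left (f : C →ₗ[k] B) : cv cvOne f = f := by
  ext c
  obtain ⟨s, hs⟩ := TensorProduct.exists_finset (R := k) (Coalgebra.comul c)
  have h1 : Coalgebra.counit.rTensor C (Coalgebra.comul c) = (1:k) ⊗ₜ[k] c :=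
    Coalgebra.rTensor_counit_comul c
  rw [hs] at h1
  simp only [map_sum, LinearMap.rTensor_tmul] at h1
  have := congrArg (TensorProduct.lift ((LinearMap.mul k B).compl₂ f ∘ₗ Algebra.linearMap k B)) h1
  simp only [map_sum, TensorProduct.lift.tmul] at this
  simpa [cv, cvOne, hs, map_sum] using this

lemma cv_one_right (f : C →ₗ[k] B) : cv f cvOne = f := by
  ext c
  obtain ⟨s, hs⟩ := TensorProduct.exists_finset (R := k) (Coalgebra.comul c)
  have h1 : Coalgebra.counit.lTensor C (Coalgebra.comul c) = c ⊗ₜ[k] (1:k) :=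
    Coalgebra.lTensor_counit_comul c
  rw [hs] at h1
  simp only [map_sum, LinearMap.lTensor_tmul] at h1
  have := congrArg (TensorProduct.lift ((LinearMap.mul k B ∘ₗ f).compl₂ (Algebra.linearMap k B))) h1
  simp only [map_sum, TensorProduct.lift.tmul] at this
  simpa [cv, cvOne, hs, map_sum] using this

lemma cv_assoc (f g e : C →ₗ[k] B) : cv (cv f g) e = cv f (cv g e) := by
  have hL : cv (cv f g) e =
      (LinearMap.mul' k B ∘ₗ (LinearMap.mul' k B).rTensor B ∘ₗ
        (TensorProduct.map (TensorProduct.map f g) e)) ∘ₗ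
        (Coalgebra.comul.rTensor C ∘ₗ Coalgebra.comul) := by
    simp only [cv]
    ext c
    obtain ⟨s, hs⟩ := TensorProduct.exists_finset (R := k) (Coalgebra.comul c)
    simp [hs, map_sum]
  have hR : cv f (cv g e) =
      (LinearMap.mul' k B ∘ₗ (LinearMap.mul' k B).lTensor B ∘ₗ
        (TensorProduct.map f (TensorProduct.map g e))) ∘ₗ
        (Coalgebra.comul.lTensor C ∘ₗ Coalgebra.comul) := by
    simp only [cv]
    ext c
    obtain ⟨s, hs⟩ := TensorProduct.exists_finset (R := k) (Coalgebra.comul c)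
    simp [hs, map_sum]
  rw [hL, hR]
  ext c
  have hco : (TensorProduct.assoc k C C C) (Coalgebra.comul.rTensor C (Coalgebra.comul c))
      = Coalgebra.comul.lTensor C (Coalgebra.comul c) := Coalgebra.coassoc_apply c
  simp only [LinearMap.comp_apply]
  rw [← hco]
  generalize (LinearMap.rTensor C (Coalgebra.comul (R := k) (A := C))) (Coalgebra.comul c) = t
  induction t using TensorProduct.induction_on with
  | zero => simp
  | tmul x y =>
    induction x using TensorProduct.induction_on with
    | zero => simp
    | tmul a b => simp [mul_assoc]
    | add u v hu hv =>
      simp only [add_tmul, map_add] at *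
      rw [hu, hv]
  | add u v hu hv => simp only [map_add] at *; rw [hu, hv]

end Conv

section Hopf
variable {A : Type u} [Ring A] [HopfAlgebra k A]

local notation "𝒮" => (HopfAlgebra.antipode k : A →ₗ[k] A)
local notation "μ" => LinearMap.mul' k A
local notation "Δ" => (Coalgebra.comul : A →ₗ[k] A ⊗[k] A)
local notation "ε" => (Coalgebra.counit : A →ₗ[k] k)

lemma antipode_one : 𝒮 (1 : A) = 1 := by
  have := HopfAlgebra.mul_antipode_rTensor_comul_apply (R := k) (A := A) 1
  simpa [Bialgebra.comul_one, Algebra.TensorProduct.one_def] using this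

lemma cv_antipode_id : cv 𝒮 (LinearMap.id : A →ₗ[k] A) = cvOne := by
  have := HopfAlgebra.mul_antipode_rTensor_comul (R := k) (A := A)
  rw [cv, cvOne, ← this]
  congr 1

lemma cv_id_antipode : cv (LinearMap.id : A →ₗ[k] A) 𝒮 = cvOne := by
  have := HopfAlgebra.mul_antipode_lTensor_comul (R := k) (A := A)
  rw [cv, cvOne, ← this]
  congr 1

lemma claim1 : cv (μ) (𝒮 ∘ₗ μ) = (cvOne : A ⊗[k] A →ₗ[k] A) := by
  apply TensorProduct.ext'
  intro a b
  obtain ⟨sa, ha⟩ := TensorProduct.exists_finset (R := k) (Coalgebra.comul a)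
  obtain ⟨sb, hb⟩ := TensorProduct.exists_finset (R := k) (Coalgebra.comul b)
  have e1 : Coalgebra.comul (a*b) = ∑ i ∈ sa, ∑ j ∈ sb, (i.1 * j.1) ⊗ₜ[k] (i.2 * j.2) := by
    rw [Bialgebra.comul_mul, ha, hb, Finset.sum_mul_sum]
    simp [Algebra.TensorProduct.tmul_mul_tmul]
  have e2 := HopfAlgebra.mul_antipode_lTensor_comul_apply (R := k) (A := A) (a * b)
  rw [e1] at e2
  simp only [map_sum, LinearMap.lTensor_tmul, LinearMap.mul'_apply] at e2
  have lhs : (cv (μ) (𝒮 ∘ₗ μ)) (a ⊗ₜ[k] b)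
      = ∑ i ∈ sa, ∑ j ∈ sb, (i.1 * j.1) * 𝒮 (i.2 * j.2) := by
    simp only [cv, LinearMap.comp_apply, TensorProduct.comul_tmul,
      TensorProduct.map_tmul]
    rw [ha, hb]
    simp [TensorProduct.sum_tmul, TensorProduct.tmul_sum, map_sum,
      tensorTensorTensorComm_tmul]
    rw [Finset.sum_comm]
  rw [lhs, e2]
  simp [cvOne, Bialgebra.counit_mul, Algebra.TensorProduct.one_def, map_mul]
  exact Algebra.commutes _ _

lemma claim2 :
    cv ((μ) ∘ₗ TensorProduct.map 𝒮 𝒮 ∘ₗ (TensorProduct.comm k A A).toLinearMap) (μ)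
      = (cvOne : A ⊗[k] A →ₗ[k] A) := by
  apply TensorProduct.ext'
  intro a b
  obtain ⟨sa, ha⟩ := TensorProduct.exists_finset (R := k) (Coalgebra.comul a)
  obtain ⟨sb, hb⟩ := TensorProduct.exists_finset (R := k) (Coalgebra.comul b)
  have ea := HopfAlgebra.mul_antipode_rTensor_comul_apply (R := k) (A := A) a
  rw [ha] at ea
  simp only [map_sum, LinearMap.rTensor_tmul, LinearMap.mul'_apply] at ea
  have eb := HopfAlgebra.mul_antipode_rTensor_comul_apply (R := k) (A := A) b
  rw [hb] at eb
  simp only [map_sum, LinearMap.rTensor_tmul, LinearMap.mul'_apply] at eb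
  have lhs : (cv ((μ) ∘ₗ TensorProduct.map 𝒮 𝒮 ∘ₗ (TensorProduct.comm k A A).toLinearMap) (μ))
      (a ⊗ₜ[k] b)
      = ∑ j ∈ sb, ∑ i ∈ sa, (𝒮 j.1 * 𝒮 i.1) * (i.2 * j.2) := by
    simp only [cv, LinearMap.comp_apply, TensorProduct.comul_tmul,
      TensorProduct.map_tmul]
    rw [ha, hb]
    simp [TensorProduct.sum_tmul, TensorProduct.tmul_sum, map_sum,
      tensorTensorTensorComm_tmul]
  rw [lhs]
  have step : ∀ j : A × A, ∑ i ∈ sa, (𝒮 j.1 * 𝒮 i.1) * (i.2 * j.2)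
      = 𝒮 j.1 * algebraMap k A (ε a) * j.2 := by
    intro j
    have : ∑ i ∈ sa, (𝒮 j.1 * 𝒮 i.1) * (i.2 * j.2)
        = 𝒮 j.1 * (∑ i ∈ sa, 𝒮 i.1 * i.2) * j.2 := by
      rw [Finset.mul_sum, Finset.sum_mul]
      apply Finset.sum_congr rfl
      intro i _
      rw [mul_assoc, mul_assoc, mul_assoc]
    rw [this, ea]
  simp only [step]
  have : ∑ j ∈ sb, 𝒮 j.1 * algebraMap k A (ε a) * j.2
      = ε a • ∑ j ∈ sb, 𝒮 j.1 * j.2 := by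
    rw [Finset.smul_sum]
    apply Finset.sum_congr rfl
    intro j _
    rw [Algebra.algebraMap_eq_smul_one]
    simp [mul_smul_comm, smul_mul_assoc]
  rw [this, eb]
  simp [cvOne, Bialgebra.counit_mul, map_mul, Algebra.TensorProduct.one_def,
    Algebra.algebraMap_eq_smul_one, smul_smul, mul_comm]


lemma antipode_mul_anti (a b : A) : 𝒮 (a * b) = 𝒮 b * 𝒮 a := by
  have key : (𝒮 ∘ₗ (μ) : A ⊗[k] A →ₗ[k] A)
      = (μ) ∘ₗ TensorProduct.map 𝒮 𝒮 ∘ₗ (TensorProduct.comm k A A).toLinearMap := by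
    calc (𝒮 ∘ₗ (μ) : A ⊗[k] A →ₗ[k] A) = cv cvOne (𝒮 ∘ₗ (μ)) := (cv_one_left _).symm
    _ = cv (cv ((μ) ∘ₗ TensorProduct.map 𝒮 𝒮 ∘ₗ (TensorProduct.comm k A A).toLinearMap) (μ))
          (𝒮 ∘ₗ (μ)) := by rw [claim2]
    _ = cv ((μ) ∘ₗ TensorProduct.map 𝒮 𝒮 ∘ₗ (TensorProduct.comm k A A).toLinearMap)
          (cv (μ) (𝒮 ∘ₗ (μ))) := cv_assoc _ _ _
    _ = cv ((μ) ∘ₗ TensorProduct.map 𝒮 𝒮 ∘ₗ (TensorProduct.comm k A A).toLinearMap) cvOne := by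
        rw [claim1]
    _ = (μ) ∘ₗ TensorProduct.map 𝒮 𝒮 ∘ₗ (TensorProduct.comm k A A).toLinearMap :=
        cv_one_right _
  have := congrArg (fun f => f (a ⊗ₜ[k] b)) key
  simpa using this

end Hopf

section Func
open Coalgebra
variable {k : Type u} [Field k] {A : Type u} [Ring A] [HopfAlgebra k A]

local notation "𝒮" => (HopfAlgebra.antipode k : A →ₗ[k] A)

/-- Embed a functional as an `A`-valued map. -/
noncomputable def ef (p : A →ₗ[k] k) : A →ₗ[k] A := Algebra.linearMap k A ∘ₗ p

lemma ef_counit : ef (Coalgebra.counit : A →ₗ[k] k) = cvOne := rfl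

lemma convF_eq (p q : A →ₗ[k] k) : convF p q = cv p q := rfl

lemma cv_ef_ef (p q : A →ₗ[k] k) : cv (ef p) (ef q) = ef (convF p q) := by
  ext a
  simp [cv, ef, convF, ← (ℛ k a).eq, map_sum, Algebra.algebraMap_eq_smul_one,
    smul_mul_assoc, mul_smul_comm, smul_smul, mul_comm]

lemma comp_cv_ef (g f : A →ₗ[k] A) (p : A →ₗ[k] k) :
    g ∘ₗ cv f (ef p) = cv (g ∘ₗ f) (ef p) := by
  ext a
  simp [cv, ef, ← (ℛ k a).eq, map_sum, Algebra.algebraMap_eq_smul_one, mul_smul_comm]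

lemma convL_eq (p : A →ₗ[k] k) (g : A →ₗ[k] A) : convL p g = cv (ef p) g := by
  ext a
  simp [convL, cv, ef, ← (ℛ k a).eq, map_sum, Algebra.algebraMap_eq_smul_one,
    smul_mul_assoc]

lemma convR_eq (g : A →ₗ[k] A) (p : A →ₗ[k] k) : convR g p = cv g (ef p) := by
  ext a
  simp [convR, cv, ef, ← (ℛ k a).eq, map_sum, Algebra.algebraMap_eq_smul_one,
    mul_smul_comm]

lemma sigmaOf_eq (p : A →ₗ[k] k) :
    sigmaOf p = cv (ef p) (cv LinearMap.id (ef p)) := by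
  rw [sigmaOf, convL_eq, convR_eq]

variable {h : A →ₗ[k] k} (mf : ModularFunctional h)

lemma sigma_comp_u :
    sigmaOf mf.ψ ∘ₗ cv LinearMap.id (ef (convF mf.ψinv mf.ψinv)) = 𝒮 ∘ₗ 𝒮 := by
  rw [comp_cv_ef, LinearMap.comp_id, ← cv_ef_ef, sigmaOf_eq, cv_assoc, cv_assoc,
    ← cv_assoc (ef mf.ψ) (ef mf.ψinv) (ef mf.ψinv), cv_ef_ef, mf.inv_left, ef_counit,
    cv_one_left, ← convR_eq, ← convL_eq, ← mf.antipode_sq]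

lemma T_eq_counit (hHaar : IsHaar h) :
    h ∘ₗ cv (cv LinearMap.id (ef (convF mf.ψinv mf.ψinv))) 𝒮
      = (Coalgebra.counit : A →ₗ[k] k) := by
  ext a
  set r := ℛ k a with hr
  have e1 : (cv (cv LinearMap.id (ef (convF mf.ψinv mf.ψinv))) 𝒮) a
      = ∑ i ∈ r.index, (cv LinearMap.id (ef (convF mf.ψinv mf.ψinv))) (r.left i)
          * 𝒮 (r.right i) := by
    simp [cv, ← r.eq, map_sum]
  rw [LinearMap.comp_apply, e1, map_sum]
  have e2 : ∀ i ∈ r.index,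
      h ((cv LinearMap.id (ef (convF mf.ψinv mf.ψinv))) (r.left i) * 𝒮 (r.right i))
        = h (𝒮 (𝒮 (r.left i) * r.right i)) := by
    intro i _
    rw [mf.kms]
    have : sigmaOf mf.ψ ((cv LinearMap.id (ef (convF mf.ψinv mf.ψinv))) (r.left i))
        = 𝒮 (𝒮 (r.left i)) := congr_fun (congrArg DFunLike.coe (sigma_comp_u mf)) (r.left i)
    rw [this, antipode_mul_anti]
  rw [Finset.sum_congr rfl e2, ← map_sum, ← map_sum, HopfAlgebra.sum_antipode_mul_eq_algebraMap_counit r,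
    Algebra.algebraMap_eq_smul_one, map_smul, antipode_one, map_smul, hHaar.map_one,
    smul_eq_mul, mul_one]

end Func

section Twist
open Coalgebra
variable {k : Type u} [Field k] {A : Type u} [Ring A] [HopfAlgebra k A]
variable {V : Type u} [AddCommGroup V] [Module k V]

local notation "𝒮" => (HopfAlgebra.antipode k : A →ₗ[k] A)

lemma rid_natural (ρ : V →ₗ[k] V ⊗[k] A) :
    ρ ∘ₗ (TensorProduct.rid k V).toLinearMap
      = (TensorProduct.rid k (V ⊗[k] A)).toLinearMap ∘ₗ ρ.rTensor k := by
  apply TensorProduct.ext'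
  intro v c
  simp [TensorProduct.smul_tmul']

/-- The key structural identity for `avg` of a comodule twist. -/
lemma big_structural (ρ : V →ₗ[k] V ⊗[k] A) (φ : A →ₗ[k] k) (h : A →ₗ[k] k) :
    ((TensorProduct.rid k V).toLinearMap ∘ₗ h.lTensor V ∘ₗ
        (LinearMap.mul' k A).lTensor V ∘ₗ (TensorProduct.assoc k V A A).toLinearMap ∘ₗ
        (LinearMap.lTensor (V ⊗[k] A) 𝒮) ∘ₗ
        ((TensorProduct.rid k (V ⊗[k] A)).toLinearMap.rTensor A) ∘ₗ
        ((LinearMap.lTensor (V ⊗[k] A) φ).rTensor A) ∘ₗ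
        (TensorProduct.assoc k (V ⊗[k] A) A A).symm.toLinearMap ∘ₗ
        (LinearMap.lTensor (V ⊗[k] A) (Coalgebra.comul (R := k) (A := A))) ∘ₗ
        (TensorProduct.assoc k V A A).symm.toLinearMap)
      = (TensorProduct.rid k V).toLinearMap ∘ₗ
          LinearMap.lTensor V
            (h ∘ₗ LinearMap.mul' k A ∘ₗ LinearMap.lTensor A (AvgAux.cv (AvgAux.ef φ) 𝒮)) := by
  apply TensorProduct.ext'
  intro v t
  induction t using TensorProduct.induction_on with
  | zero => simp
  | add s t hs ht =>
    simp only [TensorProduct.tmul_add, map_add] at *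
    rw [hs, ht]
  | tmul b c =>
    obtain ⟨s, hs⟩ := TensorProduct.exists_finset (R := k) (Coalgebra.comul c)
    simp only [LinearMap.comp_apply, LinearEquiv.coe_coe, TensorProduct.assoc_symm_tmul,
      LinearMap.lTensor_tmul, LinearMap.rTensor_tmul, AvgAux.cv, AvgAux.ef]
    rw [hs]
    simp [TensorProduct.tmul_sum, map_sum, Finset.smul_sum, TensorProduct.smul_tmul',
      Algebra.algebraMap_eq_smul_one, smul_mul_assoc, mul_smul_comm, Finset.mul_sum,
      smul_smul, mul_comm]

/-- Averaging the twist of a comodule equals the twist by the averaged functional. -/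
lemma avg_comodTwist (ρ : V →ₗ[k] V ⊗[k] A)
    (hco : (TensorProduct.assoc k V A A).toLinearMap ∘ₗ ρ.rTensor A ∘ₗ ρ
      = (Coalgebra.comul (R := k) (A := A)).lTensor V ∘ₗ ρ)
    (h : A →ₗ[k] k) (φ : A →ₗ[k] k) :
    avg ρ ρ h (comodTwist φ ρ)
      = comodTwist (h ∘ₗ AvgAux.cv LinearMap.id (AvgAux.cv (AvgAux.ef φ) 𝒮)) ρ := by
  ext x
  have hx : ρ.rTensor A (ρ x)
      = (TensorProduct.assoc k V A A).symm.toLinearMap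
          ((Coalgebra.comul (R := k) (A := A)).lTensor V (ρ x)) := by
    have h0 := LinearMap.congr_fun hco x
    simp only [LinearMap.comp_apply] at h0
    rw [← h0]
    simp
  set w1 := (Coalgebra.comul (R := k) (A := A)).lTensor V (ρ x) with hw1
  set w2 := (TensorProduct.assoc k V A A).symm.toLinearMap w1 with hw2
  -- step A : (tw.rTensor A) (ρ x)
  have stepA : (comodTwist φ ρ).rTensor A (ρ x)
      = (((TensorProduct.rid k V).toLinearMap ∘ₗ φ.lTensor V).rTensor A) w2 := by
    have e : comodTwist φ ρ = ((TensorProduct.rid k V).toLinearMap ∘ₗ φ.lTensor V) ∘ₗ ρ := rfl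
    rw [e, LinearMap.rTensor_comp, LinearMap.comp_apply, hx]
  -- express avg applied to x
  have expand : avg ρ ρ h (comodTwist φ ρ) x
      = (TensorProduct.rid k V).toLinearMap (h.lTensor V
          ((LinearMap.mul' k A).lTensor V ((TensorProduct.assoc k V A A).toLinearMap
            (ρ.rTensor A ((HopfAlgebra.antipode (R := k)).lTensor V
              ((comodTwist φ ρ).rTensor A (ρ x))))))) := by
    simp only [avg, LinearMap.comp_apply]
  rw [expand, stepA]
  -- commute ρ.rTensor with the S action and the contraction
  have s1 : ρ.rTensor A ∘ₗ LinearMap.lTensor V 𝒮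
      = LinearMap.lTensor (V ⊗[k] A) 𝒮 ∘ₗ ρ.rTensor A := by
    rw [LinearMap.rTensor_comp_lTensor, LinearMap.lTensor_comp_rTensor]
  have s4 : ρ.rTensor (A ⊗[k] A) ∘ₗ LinearMap.lTensor V (Coalgebra.comul (R := k) (A := A))
      = LinearMap.lTensor (V ⊗[k] A) (Coalgebra.comul (R := k) (A := A)) ∘ₗ ρ.rTensor A := by
    rw [LinearMap.rTensor_comp_lTensor, LinearMap.lTensor_comp_rTensor]
  have s3 : (ρ.rTensor A).rTensor A ∘ₗ (TensorProduct.assoc k V A A).symm.toLinearMap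
      = (TensorProduct.assoc k (V ⊗[k] A) A A).symm.toLinearMap ∘ₗ
          ρ.rTensor (A ⊗[k] A) := by
    apply TensorProduct.ext'
    intro v t
    induction t using TensorProduct.induction_on with
    | zero => simp
    | add s t hs ht => simp only [TensorProduct.tmul_add, map_add] at *; rw [hs, ht]
    | tmul b c => simp
  have key : ρ.rTensor A ((HopfAlgebra.antipode (R := k)).lTensor V
        ((((TensorProduct.rid k V).toLinearMap ∘ₗ φ.lTensor V).rTensor A) w2))
      = (LinearMap.lTensor (V ⊗[k] A) 𝒮)
          (((TensorProduct.rid k (V ⊗[k] A)).toLinearMap.rTensor A)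
            (((LinearMap.lTensor (V ⊗[k] A) φ).rTensor A)
              ((TensorProduct.assoc k (V ⊗[k] A) A A).symm.toLinearMap
                ((LinearMap.lTensor (V ⊗[k] A) (Coalgebra.comul (R := k) (A := A))) w2)))) := by
    rw [← LinearMap.comp_apply (ρ.rTensor A), s1]
    -- now : lTensor S (ρ.rTensor A ((rid ∘ φ.lT).rTensor A w2))
    rw [LinearMap.comp_apply]
    congr 1
    rw [← LinearMap.comp_apply, ← LinearMap.rTensor_comp]
    have hcomp : ρ ∘ₗ (TensorProduct.rid k V).toLinearMap ∘ₗ φ.lTensor V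
        = (TensorProduct.rid k (V ⊗[k] A)).toLinearMap ∘ₗ
            LinearMap.lTensor (V ⊗[k] A) φ ∘ₗ ρ.rTensor A := by
      rw [← LinearMap.comp_assoc, rid_natural, LinearMap.comp_assoc]
      congr 1
      rw [LinearMap.rTensor_comp_lTensor, LinearMap.lTensor_comp_rTensor]
    rw [hcomp]
    rw [LinearMap.rTensor_comp, LinearMap.rTensor_comp]
    simp only [LinearMap.comp_apply]
    congr 1
    congr 1
    -- ((ρ.rTensor A).rTensor A) w2 = assoc.symm (lTensor comul w2)
    rw [hw2, ← LinearMap.comp_apply ((ρ.rTensor A).rTensor A), s3, LinearMap.comp_apply]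
    congr 1
    rw [← LinearMap.comp_apply (ρ.rTensor (A ⊗[k] A)), s4, LinearMap.comp_apply]
    rw [hx, hw2]
  rw [key]
  -- now apply the big structural identity
  have hb := LinearMap.congr_fun (big_structural ρ φ h) w1
  simp only [LinearMap.comp_apply] at hb
  rw [← hw2] at hb
  rw [hb]
  rw [comodTwist]
  simp only [LinearMap.comp_apply, hw1]
  rw [← LinearMap.comp_apply (LinearMap.lTensor V _), ← LinearMap.lTensor_comp]
  rfl

end Twist


section Peel
open Coalgebra
variable {k : Type u} [Field k] {A : Type u} [Ring A] [HopfAlgebra k A]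
variable {M W : Type u} [AddCommGroup M] [Module k M] [AddCommGroup W] [Module k W]

local notation "𝒮" => (HopfAlgebra.antipode k : A →ₗ[k] A)

/-- Contraction `m' ⊗ a' ↦ h(a' c) m'`. -/
noncomputable def contrM (h : A →ₗ[k] k) (c : A) : M ⊗[k] A →ₗ[k] M :=
  (TensorProduct.rid k M).toLinearMap ∘ₗ
    LinearMap.lTensor M (h ∘ₗ LinearMap.mulRight k c)

@[simp] lemma contrM_tmul (h : A →ₗ[k] k) (c : A) (m : M) (a : A) :
    contrM h c (m ⊗ₜ[k] a) = h (a * c) • m := by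
  simp [contrM]

/-- `(w' ⊗ c) ⊗ d ↦ ∑ h(a' (c (S d ⬝ S a))) (m' ⊗ w')` for `t = ∑ m' ⊗ a'`. -/
noncomputable def lamFun (h : A →ₗ[k] k) (t : M ⊗[k] A) (a : A) :
    (W ⊗[k] A) ⊗[k] A →ₗ[k] M ⊗[k] W :=
  (TensorProduct.rid k (M ⊗[k] W)).toLinearMap ∘ₗ
    LinearMap.lTensor (M ⊗[k] W) h ∘ₗ
    LinearMap.lTensor (M ⊗[k] W) (LinearMap.mul' k A) ∘ₗ
    (TensorProduct.tensorTensorTensorComm k M A W A).toLinearMap ∘ₗ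
    (TensorProduct.mk k (M ⊗[k] A) (W ⊗[k] A)) t ∘ₗ
    LinearMap.lTensor W (LinearMap.mul' k A) ∘ₗ
    (TensorProduct.assoc k W A A).toLinearMap ∘ₗ
    LinearMap.lTensor (W ⊗[k] A) (LinearMap.mulRight k (𝒮 a) ∘ₗ 𝒮)

@[simp] lemma lamFun_tmul (h : A →ₗ[k] k) (m' : M) (a' : A) (a : A)
    (w' : W) (c d : A) :
    lamFun h (m' ⊗ₜ[k] a') a ((w' ⊗ₜ[k] c) ⊗ₜ[k] d)
      = h (a' * (c * (𝒮 d * 𝒮 a))) • (m' ⊗ₜ[k] w') := by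
  simp [lamFun, tensorTensorTensorComm_tmul]

lemma lamFun_t_zero (h : A →ₗ[k] k) (a : A) :
    lamFun (W := W) h (0 : M ⊗[k] A) a = 0 := by
  apply LinearMap.ext
  intro x
  unfold lamFun
  simp [LinearMap.comp_apply, TensorProduct.zero_tmul]

lemma lamFun_t_add (h : A →ₗ[k] k) (t₁ t₂ : M ⊗[k] A) (a : A) :
    lamFun (W := W) h (t₁ + t₂) a = lamFun h t₁ a + lamFun h t₂ a := by
  apply LinearMap.ext
  intro x
  unfold lamFun
  simp only [LinearMap.comp_apply, TensorProduct.mk_apply, TensorProduct.add_tmul,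
    map_add, LinearMap.add_apply]

/-- `w' ⊗ e ↦ ∑ h(a' (e ⬝ S a)) (m' ⊗ w')`. -/
noncomputable def emFun (h : A →ₗ[k] k) (t : M ⊗[k] A) (a : A) :
    W ⊗[k] A →ₗ[k] M ⊗[k] W :=
  (TensorProduct.rid k (M ⊗[k] W)).toLinearMap ∘ₗ
    LinearMap.lTensor (M ⊗[k] W) h ∘ₗ
    LinearMap.lTensor (M ⊗[k] W) (LinearMap.mul' k A) ∘ₗ
    (TensorProduct.tensorTensorTensorComm k M A W A).toLinearMap ∘ₗ
    (TensorProduct.mk k (M ⊗[k] A) (W ⊗[k] A)) t ∘ₗ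
    LinearMap.lTensor W (LinearMap.mulRight k (𝒮 a))

@[simp] lemma emFun_tmul (h : A →ₗ[k] k) (m' : M) (a' : A) (a : A) (w' : W) (e : A) :
    emFun h (m' ⊗ₜ[k] a') a (w' ⊗ₜ[k] e)
      = h (a' * (e * 𝒮 a)) • (m' ⊗ₜ[k] w') := by
  simp [emFun, tensorTensorTensorComm_tmul]

lemma emFun_t_zero (h : A →ₗ[k] k) (a : A) :
    emFun (W := W) h (0 : M ⊗[k] A) a = 0 := by
  apply LinearMap.ext
  intro x
  unfold emFun
  simp [LinearMap.comp_apply, TensorProduct.zero_tmul]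

lemma emFun_t_add (h : A →ₗ[k] k) (t₁ t₂ : M ⊗[k] A) (a : A) :
    emFun (W := W) h (t₁ + t₂) a = emFun h t₁ a + emFun h t₂ a := by
  apply LinearMap.ext
  intro x
  unfold emFun
  simp only [LinearMap.comp_apply, TensorProduct.mk_apply, TensorProduct.add_tmul,
    map_add, LinearMap.add_apply]

lemma lam_assoc_symm (h : A →ₗ[k] k) (t : M ⊗[k] A) (a : A) (x : W ⊗[k] (A ⊗[k] A)) :
    lamFun h t a ((TensorProduct.assoc k W A A).symm x)
      = emFun h t a ((LinearMap.lTensor W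
          ((LinearMap.mul' k A) ∘ₗ LinearMap.lTensor A 𝒮)) x) := by
  induction x using TensorProduct.induction_on with
  | zero => simp
  | add x y hx hy => simp only [map_add] at *; rw [hx, hy]
  | tmul w' u =>
    induction u using TensorProduct.induction_on with
    | zero => simp
    | add u v hu hv =>
      simp only [TensorProduct.tmul_add, map_add] at *; rw [hu, hv]
    | tmul c d =>
      induction t using TensorProduct.induction_on with
      | zero => rw [lamFun_t_zero, emFun_t_zero]; simp
      | add t₁ t₂ h₁ h₂ =>
        rw [lamFun_t_add, emFun_t_add]
        simp only [LinearMap.add_apply]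
        rw [h₁, h₂]
      | tmul m' a' => simp [mul_assoc]

lemma emFun_one (h : A →ₗ[k] k) (t : M ⊗[k] A) (a : A) (w : W) :
    emFun h t a (w ⊗ₜ[k] (1 : A)) = (contrM h (𝒮 a) t) ⊗ₜ[k] w := by
  induction t using TensorProduct.induction_on with
  | zero => rw [emFun_t_zero]; simp
  | add t₁ t₂ h₁ h₂ =>
    rw [emFun_t_add]
    simp only [LinearMap.add_apply, map_add, TensorProduct.add_tmul]
    rw [h₁, h₂]
  | tmul m' a' => simp [TensorProduct.smul_tmul', one_mul]

lemma contr_core (h : A →ₗ[k] k) (t : M ⊗[k] A) (c : A) :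
    (TensorProduct.rid k M).toLinearMap (h.lTensor M ((LinearMap.mul' k A).lTensor M
      ((TensorProduct.assoc k M A A).toLinearMap (t ⊗ₜ[k] c)))) = contrM h c t := by
  induction t using TensorProduct.induction_on with
  | zero => simp [TensorProduct.zero_tmul]
  | add t₁ t₂ h₁ h₂ => simp only [TensorProduct.add_tmul, map_add] at *; rw [h₁, h₂]
  | tmul m' a' => simp

lemma lam_core (h : A →ₗ[k] k) (t : M ⊗[k] A) (s : W ⊗[k] A) (a b : A) :
    (TensorProduct.rid k (M ⊗[k] W)).toLinearMap
      (h.lTensor (M ⊗[k] W) ((LinearMap.mul' k A).lTensor (M ⊗[k] W)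
        ((TensorProduct.assoc k (M ⊗[k] W) A A).toLinearMap
          (((LinearMap.mul' k A).lTensor (M ⊗[k] W)
            ((TensorProduct.tensorTensorTensorComm k M A W A).toLinearMap (t ⊗ₜ[k] s)))
              ⊗ₜ[k] 𝒮 (a * b)))))
      = lamFun h t a (s ⊗ₜ[k] b) := by
  rw [antipode_mul_anti]
  induction t using TensorProduct.induction_on with
  | zero => rw [lamFun_t_zero]; simp [TensorProduct.zero_tmul]
  | add t₁ t₂ h₁ h₂ =>
    rw [lamFun_t_add]
    simp only [TensorProduct.add_tmul, map_add, LinearMap.add_apply] at *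
    rw [h₁, h₂]
  | tmul m' a' =>
    induction s using TensorProduct.induction_on with
    | zero => simp [TensorProduct.tmul_zero]
    | add s₁ s₂ h₁ h₂ =>
      simp only [TensorProduct.tmul_add, TensorProduct.add_tmul, map_add] at *
      rw [h₁, h₂]
    | tmul w' b' => simp [tensorTensorTensorComm_tmul, mul_assoc]

/-- Peeling a tensor factor off averaging. -/
lemma avg_rTensor (ρM : M →ₗ[k] M ⊗[k] A) (g : M →ₗ[k] M) (ρW : W →ₗ[k] W ⊗[k] A)
    (hcoW : (TensorProduct.assoc k W A A).toLinearMap ∘ₗ ρW.rTensor A ∘ₗ ρW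
      = (Coalgebra.comul (R := k) (A := A)).lTensor W ∘ₗ ρW)
    (hctW : (TensorProduct.rid k W).toLinearMap ∘ₗ
      (Coalgebra.counit (R := k) (A := A)).lTensor W ∘ₗ ρW = LinearMap.id)
    (h : A →ₗ[k] k) :
    avg (tensorCoactMap ρM ρW) (tensorCoactMap ρM ρW) h (g.rTensor W)
      = (avg ρM ρM h g).rTensor W := by
  apply TensorProduct.ext'
  intro m w
  obtain ⟨sm, rm⟩ := TensorProduct.exists_finset (R := k) (ρM m)
  obtain ⟨sw, rww⟩ := TensorProduct.exists_finset (R := k) (ρW w)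
  -- counit fact
  have hcu : (Coalgebra.counit (R := k) (A := A)).lTensor W (ρW w) = w ⊗ₜ[k] (1:k) := by
    have h2 := LinearMap.congr_fun hctW w
    simp only [LinearMap.comp_apply, LinearMap.id_apply] at h2
    apply (TensorProduct.rid k W).injective
    simpa using h2
  -- coassoc fact
  have hcoel : ρW.rTensor A (ρW w) = (TensorProduct.assoc k W A A).symm
      ((Coalgebra.comul (R := k) (A := A)).lTensor W (ρW w)) := by
    have := LinearMap.congr_fun hcoW w
    simp only [LinearMap.comp_apply] at this
    rw [← this]
    simp
  -- RHS
  have hAvg : avg ρM ρM h g m = ∑ i ∈ sm, contrM h (𝒮 i.2) (ρM (g i.1)) := by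
    simp only [avg, LinearMap.comp_apply]
    rw [rm]
    simp only [map_sum, LinearMap.rTensor_tmul, LinearMap.lTensor_tmul]
    exact Finset.sum_congr rfl fun (i : M × A) _ => contr_core h (ρM (g i.1)) (𝒮 i.2)
  have hRHS : (avg ρM ρM h g).rTensor W (m ⊗ₜ[k] w)
      = ∑ i ∈ sm, (contrM h (𝒮 i.2) (ρM (g i.1))) ⊗ₜ[k] w := by
    rw [LinearMap.rTensor_tmul, hAvg, TensorProduct.sum_tmul]
  -- LHS
  have hLHS : avg (tensorCoactMap ρM ρW) (tensorCoactMap ρM ρW) h (g.rTensor W)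
        (m ⊗ₜ[k] w)
      = ∑ i ∈ sm, ∑ j ∈ sw, lamFun h (ρM (g i.1)) i.2 ((ρW j.1) ⊗ₜ[k] j.2) := by
    simp only [avg, tensorCoactMap, LinearMap.comp_apply, TensorProduct.map_tmul]
    rw [rm, rww]
    simp only [TensorProduct.sum_tmul, TensorProduct.tmul_sum, map_sum,
      tensorTensorTensorComm_tmul, LinearMap.lTensor_tmul, LinearMap.rTensor_tmul,
      LinearMap.mul'_apply, LinearEquiv.coe_coe]
    rw [Finset.sum_comm]
    refine Finset.sum_congr rfl fun (i : M × A) _ =>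
      Finset.sum_congr rfl fun (j : W × A) _ => ?_
    exact lam_core h (ρM (g i.1)) (ρW j.1) i.2 j.2
  rw [hLHS, hRHS]
  refine Finset.sum_congr rfl fun i _ => ?_
  -- fixed i : sum over j
  have hj : ∑ j ∈ sw, lamFun h (ρM (g i.1)) i.2 ((ρW j.1) ⊗ₜ[k] j.2)
      = lamFun h (ρM (g i.1)) i.2 (ρW.rTensor A (ρW w)) := by
    rw [rww, map_sum]
    simp only [LinearMap.rTensor_tmul, map_sum]
  rw [hj, hcoel, lam_assoc_symm]
  have hcontr : (LinearMap.lTensor W ((LinearMap.mul' k A) ∘ₗ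
          LinearMap.lTensor A (HopfAlgebra.antipode k : A →ₗ[k] A)))
        ((LinearMap.lTensor W (Coalgebra.comul (R := k) (A := A))) (ρW w))
      = w ⊗ₜ[k] (1 : A) := by
    rw [← LinearMap.comp_apply _ _ (ρW w), ← LinearMap.lTensor_comp, LinearMap.comp_assoc,
      HopfAlgebra.mul_antipode_lTensor_comul, LinearMap.lTensor_comp,
      LinearMap.comp_apply, hcu]
    simp
  rw [hcontr, emFun_one]

end Peel

end AvgAux

/-- For the free relative Hopf bimodule `R ⊗ V ⊗ R` over a cosemisimple
Hopf algebra, the averaging of `ρ ⊗ id_V ⊗ id_R` (where `ρ = id ∗ ψ⁻²` is the modular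
twist of `R`) is the identity. -/
theorem avg_twist_free_relhopf_eq_id (k A R V : Type u) [Field k] [IsAlgClosed k]
    [Ring A] [HopfAlgebra k A] [Ring R] [Algebra k R] [AddCommGroup V] [Module k V]
    (h : A →ₗ[k] k) (hHaar : IsHaar h) (mf : ModularFunctional h)
    (c : RightComodAlg k A R) (coV : RightCoaction k A V) :
    avg (tensorCoactMap (tensorCoactMap c.ρ coV.ρ) c.ρ)
        (tensorCoactMap (tensorCoactMap c.ρ coV.ρ) c.ρ) h
        (((comodTwist (convF mf.ψinv mf.ψinv) c.ρ).rTensor V).rTensor R)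
      = LinearMap.id := by
  rw [AvgAux.avg_rTensor _ _ _ c.coassoc c.counit_comp h]
  rw [AvgAux.avg_rTensor _ _ _ coV.coassoc coV.counit_comp h]
  rw [AvgAux.avg_comodTwist c.ρ c.coassoc h (convF mf.ψinv mf.ψinv)]
  rw [← AvgAux.cv_assoc, AvgAux.T_eq_counit mf hHaar]
  rw [show comodTwist (Coalgebra.counit) c.ρ = LinearMap.id from c.counit_comp]
  rw [LinearMap.rTensor_id, LinearMap.rTensor_id]
end
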